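/- In an e-ring, for g,h ∈ E⁺: (i) gh = 0 implies hg = 0; and (ii) if gh = hg and g ≤ h, then g² ≤ h². -/
import Mathlib


/-- An e-ring: an associative unital ring `R` together with a set `E` of effects.
`E⁺` is the additive submonoid generated by `E` (the set of finite sums of effects). -/
structure ERing (R : Type*) [Ring R] where
  E : Set R
  zero_mem : (0:R) ∈ E
  one_mem : (1:R) ∈ E
  compl_mem : ∀ e ∈ E, 1 - e ∈ E
  ax_i : ∀ a ∈ AddSubmonoid.closure E, -a ∈ AddSubmonoid.closure E → a = 0
  ax_ii : ∀ a ∈ AddSubmonoid.closure E, 1 - a ∈ AddSubmonoid.closure E → a ∈ E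
  ax_iii : ∀ a ∈ AddSubmonoid.closure E, ∀ b ∈ AddSubmonoid.closure E,
    a * b = b * a → a * b ∈ AddSubmonoid.closure E
  ax_iv : ∀ a ∈ AddSubmonoid.closure E, ∀ b ∈ AddSubmonoid.closure E,
    a * b * a ∈ AddSubmonoid.closure E
  ax_v : ∀ a ∈ AddSubmonoid.closure E, ∀ b ∈ AddSubmonoid.closure E,
    a * b * a = 0 → a * b = 0 ∧ b * a = 0
  ax_vi : ∀ a ∈ AddSubmonoid.closure E, ∀ b ∈ AddSubmonoid.closure E,
    (a - b) * (a - b) ∈ AddSubmonoid.closure E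

namespace ERing

variable {R : Type*} [Ring R]

/-- The positive cone `E⁺`: all finite sums of effects. -/
def Ep (S : ERing R) : Set R := (AddSubmonoid.closure S.E : Set R)

/-- The directed group `G = E⁺ − E⁺` (as a subset of `R`). -/
def G (S : ERing R) : Set R := {x | ∃ a ∈ S.Ep, ∃ b ∈ S.Ep, x = a - b}

/-- The partial order with positive cone `E⁺`: `g ≤ h` iff `h − g ∈ E⁺`. -/
def le (S : ERing R) (g h : R) : Prop := h - g ∈ S.Ep

/-- The set of projections: idempotent elements of `G`. -/
def P (S : ERing R) : Set R := {p | p ∈ S.G ∧ p * p = p}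

end ERing

theorem stmt5 {R : Type*} [Ring R] (S : ERing R) :
    ∀ g ∈ S.Ep, ∀ h ∈ S.Ep,
      (g * h = 0 → h * g = 0) ∧
      (g * h = h * g → S.le g h → S.le (g * g) (h * h)) := by
  intro g hg h hh
  constructor
  · intro hgh
    exact (S.ax_v g hg h hh (by rw [hgh, zero_mul])).2
  · intro hcomm hle
    have hsum : h + g ∈ AddSubmonoid.closure S.E := AddSubmonoid.add_mem _ hh hg
    have hdiff : h - g ∈ AddSubmonoid.closure S.E := hle
    have hprod : (h - g) * (h + g) ∈ AddSubmonoid.closure S.E := by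
      apply S.ax_iii _ hdiff _ hsum
      simp only [sub_mul, add_mul, mul_add, mul_sub, hcomm]
      abel
    have key : h * h - g * g = (h - g) * (h + g) := by
      simp only [sub_mul, mul_add, hcomm]
      abel
    unfold ERing.le ERing.Ep
    rw [key]
    exact hprod
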